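/- Let P be a primal on a nonempty set X. Then the relation ↪ on the power set of X defined by A ↪ B if and only if (A ∩ B)ᶜ ∈ P is a primal-proximity on X, i.e., it satisfies all five primal-proximity axioms with respect to P. -/
import Mathlib


open Set

/-- A collection `P` of subsets of `X` is a *primal* on `X`. -/
def IsPrimalOn {X : Type*} (P : Set (Set X)) : Prop :=
  (Set.univ : Set X) ∉ P ∧
  (∀ A B : Set X, A ∈ P → B ⊆ A → B ∈ P) ∧
  (∀ A B : Set X, A ∩ B ∈ P → A ∈ P ∨ B ∈ P)

/-- A binary relation `r` on the power set of `X` is a *primal-proximity* with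
respect to a primal `P` on `X`. -/
def IsPrimalProximity {X : Type*} (P : Set (Set X)) (r : Set X → Set X → Prop) : Prop :=
  (∀ A B : Set X, r A B → r B A) ∧
  (∀ A B C : Set X, r A (B ∪ C) ↔ (r A B ∨ r A C)) ∧
  (∀ A : Set X, Aᶜ ∉ P → ∀ B : Set X, ¬ r A B) ∧
  (∀ A B : Set X, (A ∩ B)ᶜ ∈ P → r A B) ∧
  (∀ A B : Set X, ¬ r A B →
    ∃ C D : Set X, ¬ r A Cᶜ ∧ ¬ r Dᶜ B ∧ (C ∩ D)ᶜ ∉ P)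

/-- The point-primal proximity of `A`: `A^↪ = {x | {x} ↪ A}`. -/
def ppp {X : Type*} (r : Set X → Set X → Prop) (A : Set X) : Set X :=
  {x : X | r {x} A}

theorem stmt_1 {X : Type*} [Nonempty X] (P : Set (Set X)) (hP : IsPrimalOn P) :
    IsPrimalProximity P (fun A B : Set X => (A ∩ B)ᶜ ∈ P) := by
  obtain ⟨h1, h2, h3⟩ := hP
  refine ⟨?_, ?_, ?_, ?_, ?_⟩
  · intro A B h; rwa [inter_comm]
  · intro A B C
    constructor
    · intro h
      have : (A ∩ B)ᶜ ∩ (A ∩ C)ᶜ ∈ P := by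
        rw [← compl_union, ← inter_union_distrib_left]; exact h
      exact h3 _ _ this
    · rintro (h | h)
      · exact h2 _ _ h (compl_subset_compl.mpr (inter_subset_inter_right _ subset_union_left))
      · exact h2 _ _ h (compl_subset_compl.mpr (inter_subset_inter_right _ subset_union_right))
  · intro A hA B h
    exact hA (h2 _ _ h (compl_subset_compl.mpr inter_subset_left))
  · intro A B h; exact h
  · intro A B h
    refine ⟨Bᶜ, B, by simpa using h, by simp [h1], by simp [h1]⟩
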